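/- Let A be maximally monotone on H, B maximally monotone on G, K : H → G a nonzero bounded linear operator with adjoint K*, and τ, σ, γ > 0 with γ = τσ. Define T : H×G → H×G by: given (v,u), set x = J_{τA}(v − τK*(σKv − u/τ)), w = J_{B/σ}(Kv + Kx − u/γ), and T(v,u) = (v,u) + P(x − v, w − Kx) where P = diag(θ I_H, ηγ I_G) with θ, η > 0. If (v*, u*) is a fixed point of T, then with y* := σKv* − u*/τ, one has −K*y* ∈ A(v*) and y* ∈ B(Kv*); consequently 0 ∈ A(v*) + K*B(Kv*). -/

import Mathlib

open scoped InnerProductSpace Pointwise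
open ContinuousLinearMap

/-- If `(v*, u*)` is a fixed point of the primal-dual operator
`T(v,u) = (v,u) + P(x − v, w − Kx)`, where `x = J_{τA}(v − τK*(σKv − u/τ))`,
`w = J_{B/σ}(Kv + Kx − u/γ)` and `P = diag(θI, ηγI)` with `θ, η > 0`, then with
`y* = σKv* − u*/τ` one has `−K*y* ∈ A(v*)`, `y* ∈ B(Kv*)`, and consequently
`0 ∈ A(v*) + K*B(Kv*)`.  The resolvents are encoded by their graph properties:
`J_{τA}` satisfies `τ⁻¹ • (s − JA s) ∈ A (JA s)` and `J_{B/σ}` satisfies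
`σ • (s − JB s) ∈ B (JB s)`. -/
theorem stmt6 {H G : Type*} [NormedAddCommGroup H] [InnerProductSpace ℝ H] [CompleteSpace H]
    [NormedAddCommGroup G] [InnerProductSpace ℝ G] [CompleteSpace G]
    (A : H → Set H) (B : G → Set G)
    (hA_mono : ∀ x y u v : H, u ∈ A x → v ∈ A y → 0 ≤ ⟪x - y, u - v⟫_ℝ)
    (hB_mono : ∀ x y u v : G, u ∈ B x → v ∈ B y → 0 ≤ ⟪x - y, u - v⟫_ℝ)
    (K : H →L[ℝ] G) (hK : K ≠ 0)
    (τ σ γ θ η : ℝ) (hτ : 0 < τ) (hσ : 0 < σ) (hγ : γ = τ * σ)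
    (hθ : 0 < θ) (hη : 0 < η)
    (JA : H → H) (JB : G → G)
    (hJA : ∀ s : H, τ⁻¹ • (s - JA s) ∈ A (JA s))
    (hJB : ∀ s : G, σ • (s - JB s) ∈ B (JB s))
    (vstar : H) (ustar : G)
    (x : H) (w : G)
    (hx : x = JA (vstar - τ • (adjoint K) (σ • K vstar - τ⁻¹ • ustar)))
    (hw : w = JB (K vstar + K x - γ⁻¹ • ustar))
    -- `(v*, u*)` is a fixed point of `T`:
    (hfix1 : vstar + θ • (x - vstar) = vstar)
    (hfix2 : ustar + (η * γ) • (w - K x) = ustar) :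
    -(adjoint K) (σ • K vstar - τ⁻¹ • ustar) ∈ A vstar ∧
      (σ • K vstar - τ⁻¹ • ustar) ∈ B (K vstar) ∧
        (0 : H) ∈ A vstar + (adjoint K) '' B (K vstar) := by
  -- From hfix1: x = vstar
  have hxv : x = vstar := by
    have h1 : θ • (x - vstar) = 0 := by
      have := hfix1
      abel_nf at this ⊢
      linear_combination (norm := abel_nf) this
    have h2 : x - vstar = 0 := by
      have := smul_eq_zero.mp h1
      rcases this with h | h
      · exact absurd h hθ.ne'
      · exact h
    have := sub_eq_zero.mp h2
    exact this
  -- From hfix2: w = K x = K vstar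
  have hwk : w = K vstar := by
    have h1 : (η * γ) • (w - K x) = 0 := by
      have := hfix2
      abel_nf at this ⊢
      linear_combination (norm := abel_nf) this
    have hηγ : η * γ ≠ 0 := by
      have : 0 < γ := by rw [hγ]; positivity
      positivity
    have h2 : w - K x = 0 := by
      rcases smul_eq_zero.mp h1 with h | h
      · exact absurd h hηγ
      · exact h
    rw [sub_eq_zero.mp h2, hxv]
  set y : G := σ • K vstar - τ⁻¹ • ustar with hy
  -- first claim
  have hA : -(adjoint K) y ∈ A vstar := by
    have h := hJA (vstar - τ • (adjoint K) y)
    rw [← hx, hxv] at h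
    have heq : τ⁻¹ • (vstar - τ • (adjoint K) y - vstar) = -(adjoint K) y := by
      rw [sub_sub_cancel_left, smul_neg, smul_smul, inv_mul_cancel₀ hτ.ne', one_smul]
    rwa [heq] at h
  have hB : y ∈ B (K vstar) := by
    have h := hJB (K vstar + K x - γ⁻¹ • ustar)
    rw [← hw, hwk] at h
    have heq : σ • (K vstar + K x - γ⁻¹ • ustar - K vstar) = y := by
      rw [hxv, hy, hγ]
      match_scalars
      · ring
      · field_simp
    rwa [heq] at h
  refine ⟨hA, hB, ?_⟩
  refine ⟨-(adjoint K) y, hA, (adjoint K) y, ⟨y, hB, rfl⟩, by abel⟩
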